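/- Fix integers n ≥ 1, m ≥ 1, N = n + m, an integer k with 2 ≤ k ≤ m + 1, and an injective function r : Fin N → ℝ. Let Z be a uniformly random n-element subset of Fin N, and let T(Z) be the number of pairs (i, S) with i ∈ Z, S a (k−1)-element subset of the complement of Z, and r i > r j for all j ∈ S. Then E[T(Z)] = n · (1/(m+1)) · Σ_{j=0}^{m} C(j, k−1) = n · C(m+1, k) / (m+1). -/

import Mathlib

open Finset

lemma fiber_card {N n k : ℕ} (hn : 1 ≤ n)
    (i : Fin N) (S : Finset (Fin N)) (hiS : i ∉ S) (hS : S.card = k - 1) (hk : 1 ≤ k) :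
    (((univ : Finset (Fin N)).powersetCard n).filter
      (fun Z => i ∈ Z ∧ S ⊆ Zᶜ)).card = (N - k).choose (n - 1) := by
  have hcard : ((insert i S)ᶜ : Finset (Fin N)).card = N - k := by
    rw [card_compl, card_insert_of_notMem hiS, hS, Fintype.card_fin]
    omega
  rw [← hcard, ← card_powersetCard]
  apply card_bij' (fun Z _ => Z.erase i) (fun W _ => insert i W)
  · intro Z hZ
    simp only [mem_filter] at hZ
    exact insert_erase hZ.2.1
  · intro W hW
    rw [mem_powersetCard] at hW
    have hiW : i ∉ W := fun h => by simpa using hW.1 h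
    exact erase_insert hiW
  · intro Z hZ
    simp only [mem_filter, mem_powersetCard] at hZ
    obtain ⟨⟨-, hZn⟩, hiZ, hSZ⟩ := hZ
    rw [mem_powersetCard]
    constructor
    · intro x hx
      simp only [mem_erase] at hx
      simp only [mem_compl, mem_insert, not_or]
      exact ⟨hx.1, fun hxS => (mem_compl.mp (hSZ hxS)) hx.2⟩
    · rw [card_erase_of_mem hiZ, hZn]
  · intro W hW
    rw [mem_powersetCard] at hW
    obtain ⟨hWsub, hWcard⟩ := hW
    have hiW : i ∉ W := fun h => by simpa using hWsub h
    simp only [mem_filter, mem_powersetCard]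
    refine ⟨⟨subset_univ _, ?_⟩, mem_insert_self _ _, ?_⟩
    · rw [card_insert_of_notMem hiW, hWcard]; omega
    · intro x hx
      rw [mem_compl, mem_insert]
      push_neg
      exact ⟨fun h => hiS (h ▸ hx),
        fun hxW => (mem_compl.mp (hWsub hxW)) (mem_insert_of_mem hx)⟩

lemma good_pairs_card {N k : ℕ} (hk : 1 ≤ k) (r : Fin N → ℝ) (hr : Function.Injective r) :
    ((((univ : Finset (Fin N)) ×ˢ (univ : Finset (Fin N)).powersetCard (k - 1)).filter
      (fun p => p.1 ∉ p.2 ∧ ∀ j ∈ p.2, r j < r p.1)).card) = N.choose k := by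
  have h : N.choose k = ((univ : Finset (Fin N)).powersetCard k).card := by
    rw [card_powersetCard, card_univ, Fintype.card_fin]
  rw [h]
  apply card_bij (fun p _ => insert p.1 p.2)
  · intro p hp
    simp only [mem_filter, mem_product, mem_powersetCard] at hp
    rw [mem_powersetCard]
    exact ⟨subset_univ _, by rw [card_insert_of_notMem hp.2.1, hp.1.2.2]; omega⟩
  · intro p hp q hq heq
    simp only [mem_filter, mem_product, mem_powersetCard] at hp hq
    obtain ⟨-, hp1, hp2⟩ := hp
    obtain ⟨-, hq1, hq2⟩ := hq
    have h1 : p.1 = q.1 := by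
      by_contra hne
      have hpq : p.1 ∈ insert q.1 q.2 := heq ▸ mem_insert_self p.1 p.2
      have hqp : q.1 ∈ insert p.1 p.2 := heq ▸ mem_insert_self q.1 q.2
      rw [mem_insert] at hpq hqp
      have ha : r p.1 < r q.1 := hq2 _ (hpq.resolve_left hne)
      have hb : r q.1 < r p.1 := hp2 _ (hqp.resolve_left (fun h => hne h.symm))
      exact absurd (ha.trans hb) (lt_irrefl _)
    have h2 : p.2 = q.2 := by
      rw [← erase_insert hp1, ← erase_insert hq1, heq, h1]
    exact Prod.ext h1 h2
  · intro K hK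
    rw [mem_powersetCard] at hK
    have hKne : K.Nonempty := by
      rw [← card_pos, hK.2]; omega
    obtain ⟨i, hiK, hmax⟩ := K.exists_max_image r hKne
    refine ⟨(i, K.erase i), ?_, insert_erase hiK⟩
    simp only [mem_filter, mem_product, mem_powersetCard]
    refine ⟨⟨mem_univ _, subset_univ _, by rw [card_erase_of_mem hiK, hK.2]⟩,
      notMem_erase _ _, ?_⟩
    intro j hj
    rw [mem_erase] at hj
    exact lt_of_le_of_ne (hmax j hj.2) (fun h => hj.1 (hr h))

lemma sum_T_eq {N n k : ℕ} (hn : 1 ≤ n) (hk : 2 ≤ k) (r : Fin N → ℝ)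
    (hr : Function.Injective r) :
    ∑ Z ∈ (univ : Finset (Fin N)).powersetCard n,
      ((Z ×ˢ (Zᶜ.powersetCard (k - 1))).filter (fun p => ∀ j ∈ p.2, r j < r p.1)).card
    = N.choose k * (N - k).choose (n - 1) := by
  classical
  set B := ((univ : Finset (Fin N)) ×ˢ (univ : Finset (Fin N)).powersetCard (k - 1))
    with hB
  have hswap : ∀ Z : Finset (Fin N),
      ((Z ×ˢ (Zᶜ.powersetCard (k - 1))).filter (fun p => ∀ j ∈ p.2, r j < r p.1))
      = B.filter (fun p => p.1 ∈ Z ∧ p.2 ⊆ Zᶜ ∧ ∀ j ∈ p.2, r j < r p.1) := by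
    intro Z
    ext ⟨i, S⟩
    simp only [hB, mem_filter, mem_product, mem_powersetCard, mem_univ, true_and,
      subset_univ, and_true]
    tauto
  calc ∑ Z ∈ (univ : Finset (Fin N)).powersetCard n,
        ((Z ×ˢ (Zᶜ.powersetCard (k - 1))).filter (fun p => ∀ j ∈ p.2, r j < r p.1)).card
      = ∑ Z ∈ (univ : Finset (Fin N)).powersetCard n, ∑ p ∈ B,
          if p.1 ∈ Z ∧ p.2 ⊆ Zᶜ ∧ ∀ j ∈ p.2, r j < r p.1 then 1 else 0 := by
        refine Finset.sum_congr rfl fun Z _ => ?_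
        rw [hswap Z, Finset.card_filter]
    _ = ∑ p ∈ B, ∑ Z ∈ (univ : Finset (Fin N)).powersetCard n,
          if p.1 ∈ Z ∧ p.2 ⊆ Zᶜ ∧ ∀ j ∈ p.2, r j < r p.1 then 1 else 0 :=
        Finset.sum_comm
    _ = ∑ p ∈ B, (((univ : Finset (Fin N)).powersetCard n).filter
          (fun Z => p.1 ∈ Z ∧ p.2 ⊆ Zᶜ ∧ ∀ j ∈ p.2, r j < r p.1)).card := by
        refine Finset.sum_congr rfl fun p _ => (Finset.card_filter _ _).symm
    _ = ∑ p ∈ B, if p.1 ∉ p.2 ∧ ∀ j ∈ p.2, r j < r p.1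
          then (N - k).choose (n - 1) else 0 := by
        refine Finset.sum_congr rfl fun p hp => ?_
        simp only [hB, mem_product, mem_powersetCard] at hp
        by_cases hgood : p.1 ∉ p.2 ∧ ∀ j ∈ p.2, r j < r p.1
        · rw [if_pos hgood]
          rw [show Finset.filter
                (fun Z : Finset (Fin N) => p.1 ∈ Z ∧ p.2 ⊆ Zᶜ ∧ ∀ j ∈ p.2, r j < r p.1)
                ((univ : Finset (Fin N)).powersetCard n)
              = Finset.filter (fun Z => p.1 ∈ Z ∧ p.2 ⊆ Zᶜ)
                ((univ : Finset (Fin N)).powersetCard n) from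
            Finset.filter_congr fun Z _ => by
              have := hgood.2; tauto]
          exact fiber_card hn p.1 p.2 hgood.1 hp.2.2 (by omega)
        · rw [if_neg hgood, Finset.card_eq_zero, Finset.filter_eq_empty_iff]
          intro Z _
          rintro ⟨h1, h2, h3⟩
          rcases not_and_or.mp hgood with h | h
          · rw [not_not] at h
            exact (mem_compl.mp (h2 h)) h1
          · exact h h3
    _ = N.choose k * (N - k).choose (n - 1) := by
        rw [← Finset.sum_filter, Finset.sum_const, smul_eq_mul,
          good_pairs_card (by omega : 1 ≤ k) r hr]

lemma alg_id (a b c : ℕ) :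
    (((a + b + c + 1).choose (c + 1) : ℚ)) * (((a + b).choose a : ℚ)) * ((c : ℚ) + b + 1)
      = ((a : ℚ) + 1) * (((c + b + 1).choose (c + 1) : ℚ))
          * (((a + b + c + 1).choose (a + 1) : ℚ)) := by
  have h1 : c + 1 ≤ a + b + c + 1 := by omega
  have h2 : a ≤ a + b := by omega
  have h3 : c + 1 ≤ c + b + 1 := by omega
  have h4 : a + 1 ≤ a + b + c + 1 := by omega
  rw [Nat.cast_choose ℚ h1, Nat.cast_choose ℚ h2, Nat.cast_choose ℚ h3,
    Nat.cast_choose ℚ h4]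
  rw [show a + b + c + 1 - (c + 1) = a + b by omega,
    show a + b - a = b by omega,
    show c + b + 1 - (c + 1) = b by omega,
    show a + b + c + 1 - (a + 1) = c + b by omega,
    show c + b + 1 = (c + b) + 1 by omega]
  rw [Nat.factorial_succ (c + b), Nat.factorial_succ a]
  have hf : ∀ t : ℕ, ((Nat.factorial t : ℕ) : ℚ) ≠ 0 :=
    fun t => Nat.cast_ne_zero.2 (Nat.factorial_ne_zero t)
  push_cast
  field_simp


/-- Expectation of the statistic `T(Z)` under a uniformly random `n`-element
treated subset `Z` of `Fin N`, `N = n + m`: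
`E[T(Z)] = n · (1/(m+1)) · Σ_{j=0}^{m} C(j, k−1) = n · C(m+1, k) / (m+1)`. -/
theorem expectation_of_statistic
    (n m N k : ℕ) (hn : 1 ≤ n) (hm : 1 ≤ m) (hN : N = n + m)
    (hk2 : 2 ≤ k) (hkm : k ≤ m + 1)
    (r : Fin N → ℝ) (hr : Function.Injective r)
    (T : Finset (Fin N) → ℕ)
    (hT : ∀ Z : Finset (Fin N),
      T Z = ((Z ×ˢ (Zᶜ.powersetCard (k - 1))).filter
        (fun p => ∀ j ∈ p.2, r j < r p.1)).card) :
    (∑ Z ∈ (Finset.univ : Finset (Fin N)).powersetCard n, (T Z : ℚ))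
        / (N.choose n : ℚ)
      = (n : ℚ) * ((1 : ℚ) / (m + 1))
          * ∑ j ∈ Finset.range (m + 1), (j.choose (k - 1) : ℚ)
    ∧ (n : ℚ) * ((1 : ℚ) / (m + 1))
          * ∑ j ∈ Finset.range (m + 1), (j.choose (k - 1) : ℚ)
      = (n : ℚ) * ((m + 1).choose k : ℚ) / ((m : ℚ) + 1) := by
  have hstick : ∑ j ∈ Finset.range (m + 1), (j.choose (k - 1) : ℚ)
      = ((m + 1).choose k : ℚ) := by
    rw [← Nat.cast_sum]
    congr 1
    have hsub : Finset.Icc (k - 1) m ⊆ Finset.range (m + 1) := by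
      intro x hx
      rw [Finset.mem_Icc] at hx
      rw [Finset.mem_range]
      omega
    have h0 : ∑ j ∈ Finset.range (m + 1), j.choose (k - 1)
        = ∑ j ∈ Finset.Icc (k - 1) m, j.choose (k - 1) := by
      refine (Finset.sum_subset hsub fun x hx hnx => ?_).symm
      rw [Finset.mem_range] at hx
      rw [Finset.mem_Icc] at hnx
      exact Nat.choose_eq_zero_of_lt (by omega)
    rw [h0, Nat.sum_Icc_choose]
    congr 1
    omega
  refine ⟨?_, by rw [hstick]; ring⟩
  rw [hstick]
  -- rewrite the sum of T
  have hsumT : ∑ Z ∈ (Finset.univ : Finset (Fin N)).powersetCard n, (T Z : ℚ)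
      = ((N.choose k * (N - k).choose (n - 1) : ℕ) : ℚ) := by
    rw [← Nat.cast_sum]
    congr 1
    rw [Finset.sum_congr rfl fun Z _ => hT Z]
    exact sum_T_eq hn hk2 r hr
  rw [hsumT]
  obtain ⟨a, rfl⟩ : ∃ a, n = a + 1 := ⟨n - 1, by omega⟩
  obtain ⟨c, rfl⟩ : ∃ c, k = c + 1 := ⟨k - 1, by omega⟩
  obtain ⟨b, rfl⟩ : ∃ b, m = c + b := ⟨m - c, by omega⟩
  subst hN
  rw [show a + 1 + (c + b) - (c + 1) = a + b by omega,
    show a + 1 - 1 = a by omega,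
    show a + 1 + (c + b) = a + b + c + 1 by omega,
    show c + b + 1 = c + b + 1 by rfl]
  have halg := alg_id a b c
  have hne1 : ((a + b + c + 1).choose (a + 1) : ℚ) ≠ 0 :=
    Nat.cast_ne_zero.2 (Nat.choose_pos (by omega)).ne'
  have hne2 : ((c : ℚ) + b + 1) ≠ 0 := by positivity
  push_cast
  rw [div_eq_iff hne1]
  field_simp
  linear_combination halg
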